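/- Let Z be a zero-dimensional separable metrizable space, ξ < ω₁, and let D ⊆ P(Z) be selfdual (D = {Z \ A : A ∈ D}). Then SU_ξ(D) ∩ dual(SU_ξ(D)) = PU_ξ(D). -/

import Mathlib

/-- The additive Borel hierarchy `Σ⁰_ξ` on a topological space, indexed by ordinals. -/
noncomputable def Sigma0 (X : Type*) [TopologicalSpace X] (ξ : Ordinal.{0}) : Set (Set X) :=
  {s | (ξ = 1 ∧ IsOpen s) ∨
    (1 < ξ ∧ ∃ (f : ℕ → Set X) (o : ℕ → Set.Iio ξ),
      (∀ n, 1 ≤ (o n).1) ∧ (∀ n, (f n)ᶜ ∈ Sigma0 X (o n).1) ∧ s = ⋃ n, f n)}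
termination_by ξ
decreasing_by exact (o n).2

/-- The ambiguous class `Δ⁰_ξ`. -/
noncomputable def Delta0 (X : Type*) [TopologicalSpace X] (ξ : Ordinal.{0}) : Set (Set X) :=
  {s | s ∈ Sigma0 X ξ ∧ sᶜ ∈ Sigma0 X ξ}

/-- `PU_ξ(Γ)`: partitioned unions of sets in `Γ` along a partition of `X` into
`Δ⁰_{1+ξ}` sets. -/
noncomputable def PU (X : Type*) [TopologicalSpace X] (ξ : Ordinal.{0})
    (Γ : Set (Set X)) : Set (Set X) :=
  {s | ∃ A V : ℕ → Set X, (∀ n, A n ∈ Γ) ∧ (∀ n, V n ∈ Delta0 X (1 + ξ)) ∧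
    Pairwise (Function.onFun Disjoint V) ∧ (⋃ n, V n) = Set.univ ∧
    s = ⋃ n, A n ∩ V n}

/-- `SU_ξ(Γ)`: separated unions `⋃ₙ (Aₙ ∩ Uₙ)` with `Aₙ ∈ Γ` and `(Uₙ)` pairwise
disjoint `Σ⁰_{1+ξ}` sets. -/
noncomputable def SU (X : Type*) [TopologicalSpace X] (ξ : Ordinal.{0})
    (Γ : Set (Set X)) : Set (Set X) :=
  {s | ∃ A U : ℕ → Set X, (∀ n, A n ∈ Γ) ∧ (∀ n, U n ∈ Sigma0 X (1 + ξ)) ∧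
    Pairwise (Function.onFun Disjoint U) ∧ s = ⋃ n, A n ∩ U n}

open Set TopologicalSpace

section Aux

variable {X : Type*} [TopologicalSpace X] {ξ η : Ordinal.{0}} {s t : Set X}

lemma mem_sigma0_one : s ∈ Sigma0 X 1 ↔ IsOpen s := by
  rw [Sigma0]; simp

lemma pi0_mem_sigma0 (h1 : 1 ≤ η) (hlt : η < ξ) (hs : sᶜ ∈ Sigma0 X η) :
    s ∈ Sigma0 X ξ := by
  rw [Sigma0]
  exact Or.inr ⟨lt_of_le_of_lt h1 hlt, fun _ => s, fun _ => ⟨η, hlt⟩, fun _ => h1,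
    fun _ => hs, (iUnion_const s).symm⟩

lemma isOpen_mem_sigma0 [MetrizableSpace X] (h1 : 1 ≤ ξ) (hs : IsOpen s) :
    s ∈ Sigma0 X ξ := by
  rcases eq_or_lt_of_le h1 with h | h
  · rw [Sigma0]; exact Or.inl ⟨h.symm, hs⟩
  · letI := metrizableSpaceMetric X
    obtain ⟨f, hf, hfs⟩ := (hs.isClosed_compl.isGδ).eq_iInter_nat
    rw [Sigma0]
    refine Or.inr ⟨h, fun n => (f n)ᶜ, fun _ => ⟨1, h⟩, fun _ => le_refl 1,
      fun n => by rw [compl_compl]; exact mem_sigma0_one.2 (hf n), ?_⟩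
    rw [← compl_iInter, ← hfs, compl_compl]

lemma sigma0_mono [MetrizableSpace X] (hle : η ≤ ξ) : Sigma0 X η ⊆ Sigma0 X ξ := by
  rcases eq_or_lt_of_le hle with h | h
  · exact h ▸ le_refl _
  · intro s hs
    rw [Sigma0] at hs
    rcases hs with ⟨h1, hopen⟩ | ⟨hη1, f, o, ho1, hf, rfl⟩
    · exact isOpen_mem_sigma0 (h1 ▸ hle) hopen
    · rw [Sigma0]
      exact Or.inr ⟨hη1.trans h, f, fun n => ⟨o n, (o n).2.trans h⟩, ho1, hf, rfl⟩

lemma sigma0_iUnion (h1 : 1 ≤ ξ) {f : ℕ → Set X} (hf : ∀ n, f n ∈ Sigma0 X ξ) :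
    (⋃ n, f n) ∈ Sigma0 X ξ := by
  rcases eq_or_lt_of_le h1 with h | h
  · subst h
    exact mem_sigma0_one.2 (isOpen_iUnion fun n => mem_sigma0_one.1 (hf n))
  · have hf' : ∀ n, ∃ (g : ℕ → Set X) (o : ℕ → Set.Iio ξ),
        (∀ m, 1 ≤ (o m).1) ∧ (∀ m, (g m)ᶜ ∈ Sigma0 X (o m).1) ∧ f n = ⋃ m, g m := by
      intro n
      have := hf n
      rw [Sigma0] at this
      rcases this with ⟨h1, _⟩ | ⟨_, g, o, ho1, hg, hfn⟩
      · exact absurd h1.symm h.ne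
      · exact ⟨g, o, ho1, hg, hfn⟩
    choose g o ho1 hg hfeq using hf'
    have e : ℕ ≃ ℕ × ℕ := (Denumerable.eqv (ℕ × ℕ)).symm
    rw [Sigma0]
    refine Or.inr ⟨h, fun j => g (e j).1 (e j).2, fun j => o (e j).1 (e j).2,
      fun j => ho1 _ _, fun j => hg _ _, ?_⟩
    ext x
    simp only [mem_iUnion]
    constructor
    · rintro ⟨n, hx⟩
      rw [hfeq n] at hx
      obtain ⟨m, hm⟩ := mem_iUnion.1 hx
      exact ⟨e.symm (n, m), by simpa using hm⟩
    · rintro ⟨j, hj⟩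
      exact ⟨(e j).1, by rw [hfeq]; exact mem_iUnion.2 ⟨(e j).2, hj⟩⟩

lemma sigma0_union (h1 : 1 ≤ ξ) (hs : s ∈ Sigma0 X ξ) (ht : t ∈ Sigma0 X ξ) :
    s ∪ t ∈ Sigma0 X ξ := by
  have : s ∪ t = ⋃ n : ℕ, (if n = 0 then s else t) := by
    ext x
    simp only [mem_union, mem_iUnion]
    constructor
    · rintro (h | h)
      · exact ⟨0, by simpa using h⟩
      · exact ⟨1, by simpa using h⟩
    · rintro ⟨n, hn⟩
      by_cases h : n = 0 <;> simp_all
  rw [this]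
  exact sigma0_iUnion h1 fun n => by by_cases h : n = 0 <;> simp [h, hs, ht]

lemma sigma0_inter [TopologicalSpace.MetrizableSpace X] (h1 : 1 ≤ ξ)
    (hs : s ∈ Sigma0 X ξ) (ht : t ∈ Sigma0 X ξ) : s ∩ t ∈ Sigma0 X ξ := by
  rcases eq_or_lt_of_le h1 with h | h
  · subst h
    exact mem_sigma0_one.2 ((mem_sigma0_one.1 hs).inter (mem_sigma0_one.1 ht))
  · have unfold1 : ∀ u : Set X, u ∈ Sigma0 X ξ → ∃ (g : ℕ → Set X) (o : ℕ → Set.Iio ξ),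
        (∀ m, 1 ≤ (o m).1) ∧ (∀ m, (g m)ᶜ ∈ Sigma0 X (o m).1) ∧ u = ⋃ m, g m := by
      intro u hu
      rw [Sigma0] at hu
      rcases hu with ⟨hh, _⟩ | ⟨_, g, o, ho1, hg, hfn⟩
      · exact absurd hh.symm h.ne
      · exact ⟨g, o, ho1, hg, hfn⟩
    obtain ⟨f, o, ho1, hf, rfl⟩ := unfold1 s hs
    obtain ⟨g, p, hp1, hg, rfl⟩ := unfold1 t ht
    have e : ℕ ≃ ℕ × ℕ := (Denumerable.eqv (ℕ × ℕ)).symm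
    rw [Sigma0]
    refine Or.inr ⟨h, fun j => f (e j).1 ∩ g (e j).2,
      fun j => ⟨max (o (e j).1).1 (p (e j).2).1, Set.mem_Iio.2 (max_lt (o (e j).1).2 (p (e j).2).2)⟩,
      fun j => le_max_of_le_left (ho1 _), fun j => ?_, ?_⟩
    · rw [compl_inter]
      exact sigma0_union (le_max_of_le_left (ho1 _))
        (sigma0_mono (le_max_left _ _) (hf _)) (sigma0_mono (le_max_right _ _) (hg _))
    · ext x
      simp only [mem_inter_iff, mem_iUnion]
      constructor
      · rintro ⟨⟨n, hn⟩, ⟨m, hm⟩⟩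
        exact ⟨e.symm (n, m), by simpa using ⟨hn, hm⟩⟩
      · rintro ⟨j, hj1, hj2⟩
        exact ⟨⟨(e j).1, hj1⟩, ⟨(e j).2, hj2⟩⟩

lemma delta0_compl (hs : s ∈ Delta0 X ξ) : sᶜ ∈ Delta0 X ξ :=
  ⟨hs.2, by rw [compl_compl]; exact hs.1⟩

variable [TopologicalSpace.MetrizableSpace X]

lemma delta0_union (h1 : 1 ≤ ξ) (hs : s ∈ Delta0 X ξ) (ht : t ∈ Delta0 X ξ) :
    s ∪ t ∈ Delta0 X ξ :=
  ⟨sigma0_union h1 hs.1 ht.1, by rw [compl_union]; exact sigma0_inter h1 hs.2 ht.2⟩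

lemma delta0_inter (h1 : 1 ≤ ξ) (hs : s ∈ Delta0 X ξ) (ht : t ∈ Delta0 X ξ) :
    s ∩ t ∈ Delta0 X ξ :=
  ⟨sigma0_inter h1 hs.1 ht.1, by rw [compl_inter]; exact sigma0_union h1 hs.2 ht.2⟩

lemma empty_mem_delta0 (h1 : 1 ≤ ξ) : (∅ : Set X) ∈ Delta0 X ξ :=
  ⟨isOpen_mem_sigma0 h1 isOpen_empty, by
    rw [compl_empty]; exact isOpen_mem_sigma0 h1 isOpen_univ⟩

lemma delta0_biUnion_lt (h1 : 1 ≤ ξ) {E : ℕ → Set X} (hE : ∀ i, E i ∈ Delta0 X ξ)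
    (j : ℕ) : (⋃ i < j, E i) ∈ Delta0 X ξ := by
  induction j with
  | zero => simpa using empty_mem_delta0 h1
  | succ j ih =>
    rw [biUnion_lt_succ]
    exact delta0_union h1 ih (hE j)

lemma delta0_diff (h1 : 1 ≤ ξ) (hs : s ∈ Delta0 X ξ) (ht : t ∈ Delta0 X ξ) :
    s \ t ∈ Delta0 X ξ :=
  delta0_inter h1 hs (delta0_compl ht)

lemma one_le_one_add (ξ : Ordinal.{0}) : (1 : Ordinal) ≤ 1 + ξ :=
  le_self_add

/-- Every `Σ⁰_{1+ξ}` set is a countable union of `Δ⁰_{1+ξ}` sets. -/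
lemma sigma0_eq_iUnion_delta0 [SecondCountableTopology X]
    (hbasis : TopologicalSpace.IsTopologicalBasis {s : Set X | IsClopen s})
    (ξ : Ordinal.{0}) (hs : s ∈ Sigma0 X (1 + ξ)) :
    ∃ E : ℕ → Set X, (∀ n, E n ∈ Delta0 X (1 + ξ)) ∧ s = ⋃ n, E n := by
  rcases eq_or_lt_of_le (one_le_one_add ξ) with h | h
  · -- 1 + ξ = 1 : s is open, use clopen basis
    have hopen : IsOpen s := mem_sigma0_one.1 (h ▸ hs)
    obtain ⟨S, hS, rfl⟩ := hbasis.open_eq_sUnion hopen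
    have : ⋃₀ S = ⋃ b : S, (b : Set X) := by rw [sUnion_eq_iUnion]
    obtain ⟨T, hTc, hTU⟩ := TopologicalSpace.isOpen_iUnion_countable
      (fun b : S => (b : Set X)) (fun b => (hS b.2).isOpen)
    have hclop : ∀ u : Set X, IsClopen u → u ∈ Delta0 X (1 + ξ) := by
      intro u hu
      exact ⟨isOpen_mem_sigma0 (one_le_one_add ξ) hu.isOpen,
        isOpen_mem_sigma0 (one_le_one_add ξ) hu.compl.isOpen⟩
    rcases T.eq_empty_or_nonempty with rfl | hT
    · refine ⟨fun _ => ∅, fun _ => empty_mem_delta0 (one_le_one_add ξ), ?_⟩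
      rw [this, ← hTU]; simp
    · obtain ⟨g, hg⟩ := Set.Countable.exists_eq_range hTc hT
      refine ⟨fun n => ((g n : Set X)), fun n => hclop _ (hS (g n).2), ?_⟩
      rw [this, ← hTU, hg, biUnion_range]
  · -- 1 < 1 + ξ
    rw [Sigma0] at hs
    rcases hs with ⟨hh, _⟩ | ⟨_, f, o, ho1, hf, rfl⟩
    · exact absurd hh.symm h.ne
    · refine ⟨f, fun n => ⟨pi0_mem_sigma0 (ho1 n) (o n).2 (hf n),
        sigma0_mono (le_of_lt (o n).2) (hf n)⟩, rfl⟩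

/-- Reduction/partition lemma: a countable cover by `Σ⁰_{1+ξ}` sets can be refined to a
partition into `Δ⁰_{1+ξ}` sets. -/
lemma exists_partition [SecondCountableTopology X]
    (hbasis : TopologicalSpace.IsTopologicalBasis {s : Set X | IsClopen s})
    (ξ : Ordinal.{0}) (C : ℕ → Set X) (hC : ∀ n, C n ∈ Sigma0 X (1 + ξ))
    (hcov : (⋃ n, C n) = univ) :
    ∃ V : ℕ → Set X, (∀ n, V n ⊆ C n) ∧ (∀ n, V n ∈ Delta0 X (1 + ξ)) ∧
      Pairwise (Function.onFun Disjoint V) ∧ (⋃ n, V n) = univ := by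
  have h1 : (1 : Ordinal) ≤ 1 + ξ := one_le_one_add ξ
  choose E hE1 hE2 using fun n => sigma0_eq_iUnion_delta0 hbasis ξ (hC n)
  let e : ℕ ≃ ℕ × ℕ := (Denumerable.eqv (ℕ × ℕ)).symm
  set F : ℕ → Set X := fun j => E (e j).1 (e j).2 with hF
  have hFd : ∀ j, F j ∈ Delta0 X (1 + ξ) := fun j => hE1 _ _
  set P : ℕ → Set X := fun j => F j \ ⋃ i < j, F i with hP
  have hPd : ∀ j, P j ∈ Delta0 X (1 + ξ) := fun j =>
    delta0_diff h1 (hFd j) (delta0_biUnion_lt h1 hFd j)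
  have hPF : ∀ j, P j ⊆ F j := fun j => diff_subset
  have hPdisj : ∀ i j, i ≠ j → Disjoint (P i) (P j) := by
    intro i j hij
    rcases hij.lt_or_gt with h | h
    · exact Set.disjoint_left.2 fun x hxi hxj =>
        hxj.2 (mem_biUnion h (hPF i hxi))
    · exact Set.disjoint_left.2 fun x hxi hxj =>
        hxi.2 (mem_biUnion h (hPF j hxj))
  have hPcov : (⋃ j, P j) = univ := by
    ext x
    simp only [mem_univ, iff_true, mem_iUnion]
    have hxF : ∃ j, x ∈ F j := by
      have : x ∈ ⋃ n, C n := hcov ▸ mem_univ x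
      obtain ⟨n, hn⟩ := mem_iUnion.1 this
      rw [hE2 n] at hn
      obtain ⟨m, hm⟩ := mem_iUnion.1 hn
      exact ⟨e.symm (n, m), by simpa [hF] using hm⟩
    classical
    refine ⟨Nat.find hxF, Nat.find_spec hxF, ?_⟩
    simp only [mem_iUnion, not_exists]
    intro i hi hxi
    exact absurd hxi (Nat.find_min hxF hi)
  classical
  set V : ℕ → Set X := fun n => ⋃ j, (if (e j).1 = n then P j else ∅) with hV
  have hVsig : ∀ (Q : ℕ → Prop) [DecidablePred Q],
      (⋃ j, (if Q j then P j else ∅)) ∈ Sigma0 X (1 + ξ) := by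
    intro Q _
    refine sigma0_iUnion h1 fun j => ?_
    by_cases hq : Q j
    · simpa [hq] using (hPd j).1
    · simpa [hq] using (empty_mem_delta0 h1).1
  have hmemV : ∀ x n, x ∈ V n ↔ ∃ j, (e j).1 = n ∧ x ∈ P j := by
    intro x n
    simp only [hV, mem_iUnion]
    constructor
    · rintro ⟨j, hj⟩
      by_cases hq : (e j).1 = n
      · exact ⟨j, hq, by simpa [hq] using hj⟩
      · simp [hq] at hj
    · rintro ⟨j, hq, hx⟩
      exact ⟨j, by simp [hq, hx]⟩
  have hVc : ∀ n, (V n)ᶜ = ⋃ j, (if (e j).1 ≠ n then P j else ∅) := by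
    intro n
    ext x
    have hx : ∃ j, x ∈ P j := mem_iUnion.1 (hPcov ▸ mem_univ x)
    obtain ⟨j₀, hj₀⟩ := hx
    have huniq : ∀ j, x ∈ P j → j = j₀ := by
      intro j hj
      by_contra hne
      exact (Set.disjoint_left.1 (hPdisj j j₀ hne) hj) hj₀
    simp only [mem_compl_iff, hmemV, mem_iUnion]
    constructor
    · intro h
      refine ⟨j₀, ?_⟩
      have hne : (e j₀).1 ≠ n := fun heq => h ⟨j₀, heq, hj₀⟩
      simp [hne, hj₀]
    · rintro ⟨j, hj⟩ ⟨j', hj'1, hj'2⟩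
      by_cases hq : (e j).1 ≠ n
      · rw [if_pos hq] at hj
        have hh1 : j = j₀ := huniq j hj
        have hh2 : j' = j₀ := huniq j' hj'2
        exact hq (by rw [hh1, ← hh2, hj'1])
      · rw [if_neg hq] at hj
        exact hj.elim
  refine ⟨V, ?_, ?_, ?_, ?_⟩
  · intro n x hx
    obtain ⟨j, hjn, hjP⟩ := (hmemV x n).1 hx
    have : x ∈ F j := hPF j hjP
    rw [hF] at this
    rw [← hjn, hE2 (e j).1]
    exact mem_iUnion.2 ⟨(e j).2, this⟩
  · intro n
    refine ⟨hVsig (fun j => (e j).1 = n), ?_⟩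
    rw [hVc n]
    exact hVsig (fun j => (e j).1 ≠ n)
  · intro n m hnm
    refine Set.disjoint_left.2 fun x hxn hxm => ?_
    obtain ⟨j, hjn, hjP⟩ := (hmemV x n).1 hxn
    obtain ⟨j', hj'm, hj'P⟩ := (hmemV x m).1 hxm
    have : j = j' := by
      by_contra hne
      exact (Set.disjoint_left.1 (hPdisj j j' hne) hjP) hj'P
    exact hnm (hjn ▸ hj'm ▸ this ▸ rfl)
  · ext x
    simp only [mem_univ, iff_true, mem_iUnion]
    obtain ⟨j, hj⟩ := mem_iUnion.1 (hPcov ▸ mem_univ x)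
    exact ⟨(e j).1, (hmemV x (e j).1).2 ⟨j, rfl, hj⟩⟩

end Aux

/-- If `D` is selfdual, then `SU_ξ(D) ∩ dual(SU_ξ(D)) = PU_ξ(D)` in any
zero-dimensional separable metrizable space. -/
theorem statement15 {Z : Type*} [TopologicalSpace Z]
    [TopologicalSpace.MetrizableSpace Z] [TopologicalSpace.SeparableSpace Z]
    [Nonempty Z]
    (hbasis : TopologicalSpace.IsTopologicalBasis {s : Set Z | IsClopen s})
    (ξ : Ordinal.{0}) (hξ : ξ.card ≤ Cardinal.aleph0)
    (D : Set (Set Z)) (hD : D = (fun s : Set Z => sᶜ) '' D) :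
    SU Z ξ D ∩ ((fun s : Set Z => sᶜ) '' SU Z ξ D) = PU Z ξ D := by
  letI := metrizableSpaceMetric Z
  haveI : SecondCountableTopology Z := UniformSpace.secondCountable_of_separable Z
  have h1 : (1 : Ordinal) ≤ 1 + ξ := one_le_one_add ξ
  have hDc : ∀ {a : Set Z}, a ∈ D → aᶜ ∈ D := by
    intro a ha
    rw [hD]; exact ⟨a, ha, rfl⟩
  apply subset_antisymm
  · rintro s ⟨hs1, t, ht, hts⟩
    have hsc : sᶜ ∈ SU Z ξ D := by
      have : t = sᶜ := by rw [← hts, compl_compl]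
      rwa [← this]
    obtain ⟨A, U, hA, hU, hUd, hseq⟩ := hs1
    obtain ⟨B, W, hB, hW, hWd, hsceq⟩ := hsc
    have keyU : ∀ k, s ∩ U k = A k ∩ U k := by
      intro k
      ext x
      simp only [mem_inter_iff, and_congr_left_iff]
      intro hxU
      constructor
      · intro hxs
        rw [hseq] at hxs
        obtain ⟨m, hm1, hm2⟩ := mem_iUnion.1 hxs
        rcases eq_or_ne m k with rfl | hne
        · exact hm1
        · exact absurd hxU (Set.disjoint_left.1 (hUd hne) hm2)
      · intro hxA
        rw [hseq]
        exact mem_iUnion.2 ⟨k, hxA, hxU⟩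
    have keyW : ∀ k, sᶜ ∩ W k = B k ∩ W k := by
      intro k
      ext x
      simp only [mem_inter_iff, and_congr_left_iff]
      intro hxW
      constructor
      · intro hxs
        rw [hsceq] at hxs
        obtain ⟨m, hm1, hm2⟩ := mem_iUnion.1 hxs
        rcases eq_or_ne m k with rfl | hne
        · exact hm1
        · exact absurd hxW (Set.disjoint_left.1 (hWd hne) hm2)
      · intro hxB
        rw [hsceq]
        exact mem_iUnion.2 ⟨k, hxB, hxW⟩
    classical
    set C : ℕ → Set Z := fun n => if Even n then U (n / 2) else W (n / 2) with hCdef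
    set D' : ℕ → Set Z := fun n => if Even n then A (n / 2) else (B (n / 2))ᶜ with hD'def
    have hCmem : ∀ n, C n ∈ Sigma0 Z (1 + ξ) := by
      intro n
      by_cases h : Even n <;> simp [hCdef, h, hU, hW]
    have hD'mem : ∀ n, D' n ∈ D := by
      intro n
      by_cases h : Even n <;> simp [hD'def, h, hA, hDc (hB (n / 2))]
    have hCcov : (⋃ n, C n) = univ := by
      ext x
      simp only [mem_univ, iff_true, mem_iUnion]
      by_cases hxs : x ∈ s
      · rw [hseq] at hxs
        obtain ⟨k, _, hk2⟩ := mem_iUnion.1 hxs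
        refine ⟨2 * k, ?_⟩
        simp [hCdef, Nat.mul_div_cancel_left k (by norm_num : 0 < 2), hk2]
      · have : x ∈ sᶜ := hxs
        rw [hsceq] at this
        obtain ⟨k, _, hk2⟩ := mem_iUnion.1 this
        refine ⟨2 * k + 1, ?_⟩
        have he : ¬ Even (2 * k + 1) := by simp [Nat.even_add_one]
        have hdiv : (2 * k + 1) / 2 = k := by omega
        simp [hCdef, he, hdiv, hk2]
    have hkey : ∀ n, s ∩ C n = D' n ∩ C n := by
      intro n
      by_cases h : Even n
      · simp only [hCdef, hD'def, if_pos h]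
        exact keyU (n / 2)
      · simp only [hCdef, hD'def, if_neg h]
        ext x
        simp only [mem_inter_iff, and_congr_left_iff]
        intro hxW
        have := keyW (n / 2)
        constructor
        · intro hxs hxB
          have : x ∈ B (n / 2) ∩ W (n / 2) := ⟨hxB, hxW⟩
          rw [← keyW (n / 2)] at this
          exact this.1 hxs
        · intro hxB
          by_contra hxs
          have : x ∈ sᶜ ∩ W (n / 2) := ⟨hxs, hxW⟩
          rw [keyW (n / 2)] at this
          exact hxB this.1
    obtain ⟨V, hVsub, hVdel, hVdisj, hVcov⟩ := exists_partition hbasis ξ C hCmem hCcov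
    refine ⟨D', V, hD'mem, hVdel, hVdisj, hVcov, ?_⟩
    ext x
    simp only [mem_iUnion, mem_inter_iff]
    constructor
    · intro hxs
      obtain ⟨n, hn⟩ := mem_iUnion.1 (hVcov ▸ mem_univ x)
      have : x ∈ s ∩ C n := ⟨hxs, hVsub n hn⟩
      rw [hkey n] at this
      exact ⟨n, this.1, hn⟩
    · rintro ⟨n, hxD, hxV⟩
      have : x ∈ D' n ∩ C n := ⟨hxD, hVsub n hxV⟩
      rw [← hkey n] at this
      exact this.1
  · rintro s ⟨A, V, hA, hV, hVd, hVcov, rfl⟩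
    have hcompl : (⋃ n, A n ∩ V n)ᶜ = ⋃ n, (A n)ᶜ ∩ V n := by
      ext x
      obtain ⟨n, hn⟩ := mem_iUnion.1 (hVcov ▸ mem_univ x)
      simp only [mem_compl_iff, mem_iUnion, mem_inter_iff, not_exists]
      constructor
      · intro h
        exact ⟨n, fun hxA => (h n) ⟨hxA, hn⟩, hn⟩
      · rintro ⟨m, hm1, hm2⟩ k ⟨hk1, hk2⟩
        rcases eq_or_ne k m with rfl | hne
        · exact hm1 hk1
        · exact Set.disjoint_left.1 (hVd hne) hk2 hm2
    constructor
    · exact ⟨A, V, hA, fun n => (hV n).1, hVd, rfl⟩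
    · refine ⟨(⋃ n, A n ∩ V n)ᶜ, ?_, compl_compl _⟩
      rw [hcompl]
      exact ⟨fun n => (A n)ᶜ, V, fun n => hDc (hA n), fun n => (hV n).1, hVd, rfl⟩
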